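/- Let M be the d-dimensional formal affine space over a field K, with a diagonal μ_l-action ζ·x_i = ζ^{a_i}x_i (1 ≤ a_i ≤ l). Then the set of μ_l-equivariant K-algebra homomorphisms K[[x_1,...,x_d]] → K[[t]]/t^{nl+1} (where ζ·t = ζt) consists exactly of those sending each x_i to an element of the form c_0 t^{a_i} + c_1 t^{l+a_i} + ... + c_{n-1} t^{(n-1)l+a_i} with c_j ∈ K; in particular this set is in bijection with K^{nd}, and the truncation map to K[[t]]/t^{(n-1)l+1}-jets has all fibers isomorphic to K^d. -/

import Mathlib

/-- Underlying function of the action of `ζ` on `K[[x_1,...,x_d]]` by `x_i ↦ ζ^{a_i} x_i`. -/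
noncomputable def srcFun (K : Type*) [CommRing K] {d : ℕ} (a : Fin d → ℕ) (ζ : K)
    (f : MvPowerSeries (Fin d) K) : MvPowerSeries (Fin d) K :=
  fun B => ζ ^ (∑ i, a i * B i) * MvPowerSeries.coeff B f

theorem coeff_srcFun (K : Type*) [CommRing K] {d : ℕ} (a : Fin d → ℕ) (ζ : K)
    (f : MvPowerSeries (Fin d) K) (B : Fin d →₀ ℕ) :
    MvPowerSeries.coeff B (srcFun K a ζ f)
      = ζ ^ (∑ i, a i * B i) * MvPowerSeries.coeff B f := rfl

/-- The action of a root of unity `ζ` on `K[[x_1,...,x_d]]` by `x_i ↦ ζ^{a_i} x_i`, as a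
ring homomorphism. -/
noncomputable def srcAct (K : Type*) [CommRing K] {d : ℕ} (a : Fin d → ℕ) (ζ : K) :
    MvPowerSeries (Fin d) K →+* MvPowerSeries (Fin d) K where
  toFun := srcFun K a ζ
  map_zero' := by
    apply MvPowerSeries.ext
    intro B
    rw [coeff_srcFun]
    simp
  map_one' := by
    apply MvPowerSeries.ext
    intro B
    rw [coeff_srcFun]
    by_cases hB : B = 0
    · subst hB; simp
    · simp [MvPowerSeries.coeff_one, hB]
  map_add' := by
    intro f g
    apply MvPowerSeries.ext
    intro B
    rw [map_add, coeff_srcFun, map_add, coeff_srcFun, coeff_srcFun]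
    ring
  map_mul' := by
    intro f g
    apply MvPowerSeries.ext
    intro B
    rw [coeff_srcFun, MvPowerSeries.coeff_mul, MvPowerSeries.coeff_mul, Finset.mul_sum]
    refine Finset.sum_congr rfl fun p hp => ?_
    have hB : p.1 + p.2 = B := Finset.HasAntidiagonal.mem_antidiagonal.mp hp
    rw [coeff_srcFun, coeff_srcFun]
    have hw : (∑ i, a i * B i) = (∑ i, a i * p.1 i) + (∑ i, a i * p.2 i) := by
      rw [← hB]
      simp [Finsupp.add_apply, mul_add, Finset.sum_add_distrib]
    rw [hw, pow_add]
    ring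

/-- The ideal `(t^m) ⊂ K[[t]]`. -/
noncomputable def jetIdeal (K : Type*) [CommRing K] (m : ℕ) : Ideal (PowerSeries K) :=
  Ideal.span {(PowerSeries.X : PowerSeries K) ^ m}

/-- The truncated power series ring `K[[t]]/(t^m)`. -/
abbrev JetRing (K : Type*) [CommRing K] (m : ℕ) : Type _ :=
  PowerSeries K ⧸ jetIdeal K m

/-- The action `t ↦ ζ t` on `K[[t]]/(t^m)`. -/
noncomputable def tgtAct (K : Type*) [CommRing K] (m : ℕ) (ζ : K) :
    JetRing K m →+* JetRing K m :=
  Ideal.Quotient.lift (jetIdeal K m)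
    ((Ideal.Quotient.mk (jetIdeal K m)).comp (PowerSeries.rescale ζ))
    (by
      intro y hy
      rw [RingHom.comp_apply, Ideal.Quotient.eq_zero_iff_mem, jetIdeal,
        Ideal.mem_span_singleton] at *
      rw [PowerSeries.X_pow_dvd_iff] at *
      intro j hj
      rw [PowerSeries.coeff_rescale, hy j hj, mul_zero])

/-- The truncation `K[[t]]/(t^{(n+1)l+1}) → K[[t]]/(t^{nl+1})`. -/
noncomputable def jetTrunc (K : Type*) [CommRing K] (l n : ℕ) :
    JetRing K ((n + 1) * l + 1) →+* JetRing K (n * l + 1) :=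
  Ideal.Quotient.factor (S := jetIdeal K ((n + 1) * l + 1)) (T := jetIdeal K (n * l + 1))
    (by
      rw [jetIdeal, jetIdeal, Ideal.span_le, Set.singleton_subset_iff, SetLike.mem_coe,
        Ideal.mem_span_singleton]
      refine pow_dvd_pow _ ?_
      have : n * l ≤ (n + 1) * l := Nat.mul_le_mul_right l (by omega)
      omega)

/-- `μ_l`-equivariance of a `K`-algebra homomorphism `K[[x_1,...,x_d]] → K[t]/(t^m)`,
with respect to the actions `ζ·x_i = ζ^{a_i} x_i` and `ζ·t = ζ t`. -/
def EquivJetHom (K : Type*) [CommRing K] {d : ℕ} (a : Fin d → ℕ) (ζ : K) (m : ℕ)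
    (γ : MvPowerSeries (Fin d) K →ₐ[K] JetRing K m) : Prop :=
  ∀ f, γ (srcAct K a ζ f) = tgtAct K m ζ (γ f)

namespace Aux

variable {K : Type*} [CommRing K]

lemma mem_jetIdeal {m : ℕ} {f : PowerSeries K} :
    f ∈ jetIdeal K m ↔ ∀ k < m, PowerSeries.coeff k f = 0 := by
  rw [jetIdeal, Ideal.mem_span_singleton, PowerSeries.X_pow_dvd_iff]

lemma jetMk_eq_jetMk {m : ℕ} {f g : PowerSeries K} :
    Ideal.Quotient.mk (jetIdeal K m) f = Ideal.Quotient.mk (jetIdeal K m) g ↔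
      ∀ k < m, PowerSeries.coeff k f = PowerSeries.coeff k g := by
  rw [Ideal.Quotient.eq, mem_jetIdeal]
  refine forall₂_congr fun k hk => ?_
  rw [map_sub, sub_eq_zero]

lemma jetMk_eq_zero {m : ℕ} {f : PowerSeries K} :
    Ideal.Quotient.mk (jetIdeal K m) f = 0 ↔ ∀ k < m, PowerSeries.coeff k f = 0 := by
  rw [← map_zero (Ideal.Quotient.mk (jetIdeal K m)), jetMk_eq_jetMk]
  simp

lemma jetMk_pow_eq_zero {m : ℕ} {f : PowerSeries K}
    (hf : PowerSeries.constantCoeff f = 0) :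
    (Ideal.Quotient.mk (jetIdeal K m) f) ^ m = 0 := by
  obtain ⟨g, rfl⟩ := PowerSeries.X_dvd_iff.mpr hf
  rw [← map_pow, Ideal.Quotient.eq_zero_iff_mem, mul_pow, jetIdeal, Ideal.mem_span_singleton]
  exact Dvd.intro _ rfl

lemma jetIdeal_ne_top [Nontrivial K] {m : ℕ} (hm : 0 < m) : jetIdeal K m ≠ ⊤ := by
  intro h
  have h1 : (1 : PowerSeries K) ∈ jetIdeal K m := h ▸ Submodule.mem_top
  have := mem_jetIdeal.mp h1 0 hm
  simp at this

/-- Number-theoretic helper. -/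
lemma exists_j {l n a k : ℕ} (hl : 0 < l) (ha1 : 1 ≤ a) (hal : a ≤ l) (hk1 : 1 ≤ k)
    (hk : k ≤ n * l) (hmod : k % l = a % l) : ∃ j : Fin n, k = (j : ℕ) * l + a := by
  rcases le_or_gt a k with h | h
  · have hdvd : l ∣ k - a := (Nat.modEq_iff_dvd' h).mp hmod.symm
    obtain ⟨j, hj⟩ := hdvd
    have hj' : k - a = j * l := by rw [hj, Nat.mul_comm]
    have hkeq : k = j * l + a := by omega
    have hjl : j * l < n * l := by omega
    have hjn : j < n := lt_of_mul_lt_mul_right hjl (Nat.zero_le l)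
    exact ⟨⟨j, hjn⟩, by simpa using hkeq⟩
  · exfalso
    have hdvd : l ∣ a - k := (Nat.modEq_iff_dvd' h.le).mp hmod
    have hlt : a - k < l := by omega
    have := Nat.eq_zero_of_dvd_of_lt hdvd hlt
    omega

end Aux
namespace Aux2

variable {K : Type*} [CommRing K] {d : ℕ}

open MvPowerSeries

/-- The constant finsupp `i ↦ m`. -/
noncomputable def cBound (d m : ℕ) : Fin d →₀ ℕ :=
  Finsupp.equivFunOnFinite.symm fun _ => m

@[simp] lemma cBound_apply (d m : ℕ) (i : Fin d) : cBound d m i = m := rfl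

lemma le_cBound_iff {m : ℕ} {B : Fin d →₀ ℕ} : B ≤ cBound d m ↔ ∀ i, B i ≤ m := by
  rw [Finsupp.le_def]; simp

/-- Truncation of a multivariate power series keeping coefficients `B ≤ (m,...,m)`. -/
noncomputable def truncP (m : ℕ) (f : MvPowerSeries (Fin d) K) : MvPolynomial (Fin d) K :=
  ∑ B ∈ Finset.Iic (cBound d m), MvPolynomial.monomial B (MvPowerSeries.coeff B f)

lemma coeff_truncP {m : ℕ} {f : MvPowerSeries (Fin d) K} (B : Fin d →₀ ℕ) :
    (truncP m f).coeff B = if B ≤ cBound d m then MvPowerSeries.coeff B f else 0 := by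
  classical
  rw [truncP, MvPolynomial.coeff_sum]
  simp only [MvPolynomial.coeff_monomial]
  rw [Finset.sum_ite_eq' (Finset.Iic (cBound d m)) B (fun x => MvPowerSeries.coeff x f)]
  simp [Finset.mem_Iic]

lemma truncP_add {m : ℕ} (f g : MvPowerSeries (Fin d) K) :
    truncP m (f + g) = truncP m f + truncP m g := by
  apply MvPolynomial.ext; intro B
  simp only [coeff_truncP, MvPolynomial.coeff_add, map_add]
  split_ifs <;> simp

lemma truncP_one {m : ℕ} : truncP m (1 : MvPowerSeries (Fin d) K) = 1 := by
  apply MvPolynomial.ext; intro B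
  rw [coeff_truncP, MvPowerSeries.coeff_one, MvPolynomial.coeff_one]
  by_cases hB : B = 0
  · simp [hB, le_cBound_iff]
  · simp [hB, Ne.symm hB]

lemma truncP_C {m : ℕ} (c : K) : truncP m (MvPowerSeries.C c : MvPowerSeries (Fin d) K) = MvPolynomial.C c := by
  apply MvPolynomial.ext; intro B
  rw [coeff_truncP, MvPowerSeries.coeff_C, MvPolynomial.coeff_C]
  by_cases hB : B = 0
  · simp [hB, le_cBound_iff]
  · simp [hB, Ne.symm hB]

lemma truncP_X {m : ℕ} (hm : 0 < m) (i : Fin d) :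
    truncP m (MvPowerSeries.X i : MvPowerSeries (Fin d) K) = MvPolynomial.X i := by
  apply MvPolynomial.ext; intro B
  rw [coeff_truncP, MvPowerSeries.coeff_X, MvPolynomial.coeff_X']
  by_cases hB : B = Finsupp.single i 1
  · subst hB
    have hle : Finsupp.single i 1 ≤ cBound d m := by
      rw [le_cBound_iff]; intro j; rw [Finsupp.single_apply]; split_ifs <;> omega
    simp [hle]
  · simp [hB, Ne.symm hB]

/-- Tail decomposition: a series with no coefficients `≤ (m,...,m)` lies in the ideal
generated by the `X i ^ (m+1)`. -/
lemma tail_decomp {m : ℕ} {g : MvPowerSeries (Fin d) K}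
    (hg : ∀ B ≤ cBound d m, MvPowerSeries.coeff B g = 0) :
    ∃ h : Fin d → MvPowerSeries (Fin d) K,
      g = ∑ i, (MvPowerSeries.X i : MvPowerSeries (Fin d) K) ^ (m + 1) * h i := by
  classical
  set h : Fin d → MvPowerSeries (Fin d) K := fun i B => if ∀ j, j < i → B j ≤ m
    then MvPowerSeries.coeff (B + Finsupp.single i (m + 1)) g else 0 with hh
  have happ : ∀ (i : Fin d) (B' : Fin d →₀ ℕ), MvPowerSeries.coeff B' (h i) =
      if ∀ j, j < i → B' j ≤ m
      then MvPowerSeries.coeff (B' + Finsupp.single i (m + 1)) g else 0 := fun i B' => rfl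
  refine ⟨h, ?_⟩
  apply MvPowerSeries.ext; intro B
  rw [map_sum]
  have hterm : ∀ i : Fin d,
      MvPowerSeries.coeff B ((MvPowerSeries.X i : MvPowerSeries (Fin d) K) ^ (m + 1) * h i) =
      if (m + 1 ≤ B i ∧ ∀ j, j < i → B j ≤ m)
        then MvPowerSeries.coeff B g else 0 := by
    intro i
    rw [MvPowerSeries.X_pow_eq, MvPowerSeries.coeff_monomial_mul]
    by_cases h1 : Finsupp.single i (m + 1) ≤ B
    · rw [if_pos h1]
      have h1' : m + 1 ≤ B i := Finsupp.single_le_iff.mp h1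
      have hsub : ∀ j, j ≠ i → (B - Finsupp.single i (m + 1)) j = B j := by
        intro j hj
        rw [Finsupp.tsub_apply, Finsupp.single_apply, if_neg (fun hc => hj hc.symm)]
        simp
      have hcond : (∀ j, j < i → (B - Finsupp.single i (m + 1)) j ≤ m) ↔
          (∀ j, j < i → B j ≤ m) :=
        forall_congr' fun j => imp_congr_right fun hj => by rw [hsub j (ne_of_lt hj)]
      rw [happ]
      simp only [hcond]
      rw [tsub_add_cancel_of_le h1, one_mul]
      by_cases h2 : ∀ j, j < i → B j ≤ m
      · rw [if_pos h2, if_pos ⟨h1', h2⟩]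
      · rw [if_neg h2, if_neg (fun hc => h2 hc.2)]
    · rw [if_neg h1, if_neg]
      intro hc
      exact h1 (Finsupp.single_le_iff.mpr hc.1)
  rw [Finset.sum_congr rfl (fun i _ => hterm i)]
  by_cases hB : ∀ j, B j ≤ m
  · rw [hg B (le_cBound_iff.mpr hB)]
    simp
  · push_neg at hB
    have hne : (Finset.univ.filter (fun j : Fin d => m + 1 ≤ B j)).Nonempty := by
      obtain ⟨j, hj⟩ := hB
      exact ⟨j, by simp only [Finset.mem_filter, Finset.mem_univ, true_and]; omega⟩
    set i₀ := (Finset.univ.filter (fun j : Fin d => m + 1 ≤ B j)).min' hne with hi₀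
    have hi₀mem : m + 1 ≤ B i₀ := by
      have h3 := Finset.min'_mem (Finset.univ.filter (fun j : Fin d => m + 1 ≤ B j)) hne
      rw [Finset.mem_filter] at h3
      exact h3.2
    have hmin : ∀ j, j < i₀ → B j ≤ m := by
      intro j hj
      by_contra hc
      have : i₀ ≤ j := Finset.min'_le _ j
        (by simp only [Finset.mem_filter, Finset.mem_univ, true_and]; omega)
      exact absurd hj (not_lt.mpr this)
    rw [Finset.sum_eq_single i₀]
    · rw [if_pos ⟨hi₀mem, hmin⟩]
    · intro i _ hi
      rw [if_neg]
      rintro ⟨h1, h2⟩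
      rcases lt_or_gt_of_ne hi with hlt | hgt
      · have : i₀ ≤ i := Finset.min'_le _ i
          (by simp only [Finset.mem_filter, Finset.mem_univ, true_and]; omega)
        exact absurd hlt (not_lt.mpr this)
      · have h4 := h2 i₀ hgt
        omega
    · intro hmem
      exact absurd (Finset.mem_univ i₀) hmem

end Aux2

namespace Aux3
open Aux Aux2

variable {K : Type*} [Field K] {d : ℕ}

lemma gammaX_constantCoeff {m : ℕ} (hm : 0 < m)
    (γ : MvPowerSeries (Fin d) K →ₐ[K] JetRing K m) (i : Fin d) {f : PowerSeries K}
    (hf : Ideal.Quotient.mk (jetIdeal K m) f = γ (MvPowerSeries.X i)) :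
    PowerSeries.constantCoeff f = 0 := by
  by_contra hc
  set c := PowerSeries.constantCoeff f with hcdef
  have hunit : IsUnit (MvPowerSeries.X i - MvPowerSeries.C c) := by
    rw [MvPowerSeries.isUnit_iff_constantCoeff, map_sub]
    simp only [MvPowerSeries.constantCoeff_X, MvPowerSeries.constantCoeff_C, zero_sub]
    exact (isUnit_iff_ne_zero).mpr (neg_ne_zero.mpr hc)
  have hu2 : IsUnit (γ (MvPowerSeries.X i - MvPowerSeries.C c)) := hunit.map γ
  have heq : γ (MvPowerSeries.X i - MvPowerSeries.C c)
      = Ideal.Quotient.mk (jetIdeal K m) (f - PowerSeries.C c) := by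
    rw [map_sub, map_sub, ← hf, MvPowerSeries.c_eq_algebraMap, γ.commutes c,
      ← Ideal.Quotient.mk_algebraMap K (jetIdeal K m) c]
    rfl
  have hpow : (Ideal.Quotient.mk (jetIdeal K m) (f - PowerSeries.C c)) ^ m = 0 := by
    apply jetMk_pow_eq_zero
    rw [map_sub, PowerSeries.constantCoeff_C, ← hcdef, sub_self]
  have : IsUnit ((0 : JetRing K m)) := by
    rw [← hpow, ← heq]
    exact hu2.pow m
  have hnt : Nontrivial (JetRing K m) := Ideal.Quotient.nontrivial_iff.mpr (jetIdeal_ne_top hm)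
  rw [isUnit_zero_iff] at this
  exact zero_ne_one this

lemma gammaX_pow_eq_zero {m : ℕ} (hm : 0 < m)
    (γ : MvPowerSeries (Fin d) K →ₐ[K] JetRing K m) (i : Fin d) :
    (γ (MvPowerSeries.X i)) ^ m = 0 := by
  obtain ⟨f, hf⟩ := Ideal.Quotient.mk_surjective (γ (MvPowerSeries.X i))
  rw [← hf]
  exact jetMk_pow_eq_zero (gammaX_constantCoeff hm γ i hf)

lemma algHom_apply_eq {m : ℕ} (hm : 0 < m)
    (γ : MvPowerSeries (Fin d) K →ₐ[K] JetRing K m) (f : MvPowerSeries (Fin d) K) :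
    γ f = MvPolynomial.aeval (fun i => γ (MvPowerSeries.X i)) (truncP m f) := by
  have hg : ∀ B ≤ cBound d m,
      MvPowerSeries.coeff B (f - (truncP m f : MvPowerSeries (Fin d) K)) = 0 := by
    intro B hB
    rw [map_sub, MvPolynomial.coeff_coe, coeff_truncP, if_pos hB, sub_self]
  obtain ⟨h, hdec⟩ := tail_decomp hg
  have htail : γ (f - (truncP m f : MvPowerSeries (Fin d) K)) = 0 := by
    rw [hdec, map_sum]
    apply Finset.sum_eq_zero
    intro i _
    rw [map_mul, map_pow, pow_succ, gammaX_pow_eq_zero hm γ i, zero_mul, zero_mul]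
  have hcoe : ∀ p : MvPolynomial (Fin d) K,
      (γ.comp (MvPolynomial.coeToMvPowerSeries.algHom K)) p
        = γ (p : MvPowerSeries (Fin d) K) := by
    intro p
    rw [AlgHom.comp_apply]
    congr 1
  have hsplit : γ f = γ (truncP m f : MvPowerSeries (Fin d) K) +
      γ (f - (truncP m f : MvPowerSeries (Fin d) K)) := by
    rw [← map_add]
    congr 1
    ring
  rw [hsplit, htail, add_zero, ← hcoe]
  have huni := MvPolynomial.aeval_unique (γ.comp (MvPolynomial.coeToMvPowerSeries.algHom K))
  have harg : (⇑(γ.comp (MvPolynomial.coeToMvPowerSeries.algHom K)) ∘ MvPolynomial.X)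
      = fun i => γ (MvPowerSeries.X i) := by
    funext i
    rw [Function.comp_apply, hcoe, MvPolynomial.coe_X]
  rw [huni, harg]

lemma algHom_ext_of {m : ℕ} (hm : 0 < m)
    {γ₁ γ₂ : MvPowerSeries (Fin d) K →ₐ[K] JetRing K m}
    (h : ∀ i, γ₁ (MvPowerSeries.X i) = γ₂ (MvPowerSeries.X i)) : γ₁ = γ₂ := by
  apply AlgHom.ext
  intro f
  rw [algHom_apply_eq hm γ₁, algHom_apply_eq hm γ₂]
  rw [show (fun i => γ₁ (MvPowerSeries.X i)) = fun i => γ₂ (MvPowerSeries.X i) from funext h]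

lemma aeval_eq_sum {m : ℕ} (y : Fin d → JetRing K m) (hy : ∀ i, y i ^ m = 0)
    (P : MvPolynomial (Fin d) K) :
    MvPolynomial.aeval y P = ∑ B ∈ Finset.Iic (cBound d m),
      algebraMap K (JetRing K m) (P.coeff B) * ∏ i, y i ^ B i := by
  classical
  have key : ∀ B : Fin d →₀ ℕ, ¬ B ≤ cBound d m → (∏ i, y i ^ B i) = 0 := by
    intro B hB
    rw [le_cBound_iff] at hB; push_neg at hB
    obtain ⟨i, hi⟩ := hB
    apply Finset.prod_eq_zero (Finset.mem_univ i)
    have hsplit : y i ^ B i = y i ^ m * y i ^ (B i - m) := by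
      rw [← pow_add]; congr 1; omega
    rw [hsplit, hy i, zero_mul]
  rw [MvPolynomial.aeval_def, MvPolynomial.eval₂_eq']
  set F : (Fin d →₀ ℕ) → JetRing K m :=
    fun B => algebraMap K (JetRing K m) (P.coeff B) * ∏ i, y i ^ B i with hF
  have h1 : ∑ B ∈ P.support, F B = ∑ B ∈ P.support ∪ Finset.Iic (cBound d m), F B := by
    apply Finset.sum_subset Finset.subset_union_left
    intro B _ hB
    rw [MvPolynomial.notMem_support_iff] at hB
    rw [hF]
    simp [hB]
  have h2 : ∑ B ∈ Finset.Iic (cBound d m), F B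
      = ∑ B ∈ P.support ∪ Finset.Iic (cBound d m), F B := by
    apply Finset.sum_subset Finset.subset_union_right
    intro B _ hB
    rw [Finset.mem_Iic] at hB
    rw [hF]
    simp only
    rw [key B hB, mul_zero]
  rw [← h2] at h1
  exact h1

/-- Evaluation of power series at nilpotent jets, as an algebra homomorphism. -/
noncomputable def jetEval {m : ℕ} (y : Fin d → JetRing K m) (hy : ∀ i, y i ^ m = 0) :
    MvPowerSeries (Fin d) K →ₐ[K] JetRing K m where
  toFun f := MvPolynomial.aeval y (truncP m f)
  map_one' := by
    show MvPolynomial.aeval y (truncP m (1 : MvPowerSeries (Fin d) K)) = 1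
    rw [truncP_one, map_one]
  map_zero' := by
    have h0 : truncP m (0 : MvPowerSeries (Fin d) K) = 0 := by
      apply MvPolynomial.ext; intro B
      simp [coeff_truncP]
    show MvPolynomial.aeval y (truncP m (0 : MvPowerSeries (Fin d) K)) = 0
    rw [h0, map_zero]
  map_add' f g := by
    show MvPolynomial.aeval y (truncP m (f + g))
      = MvPolynomial.aeval y (truncP m f) + MvPolynomial.aeval y (truncP m g)
    rw [truncP_add, map_add]
  map_mul' f g := by
    show MvPolynomial.aeval y (truncP m (f * g))
      = MvPolynomial.aeval y (truncP m f) * MvPolynomial.aeval y (truncP m g)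
    have hrhs : MvPolynomial.aeval y (truncP m f) * MvPolynomial.aeval y (truncP m g)
        = MvPolynomial.aeval y (truncP m f * truncP m g) := (map_mul _ _ _).symm
    rw [hrhs, aeval_eq_sum y hy, aeval_eq_sum y hy]
    refine Finset.sum_congr rfl fun B hB => ?_
    rw [Finset.mem_Iic] at hB
    have hco : (truncP m (f * g)).coeff B = (truncP m f * truncP m g).coeff B := by
      rw [coeff_truncP, if_pos hB, MvPowerSeries.coeff_mul, MvPolynomial.coeff_mul]
      refine Finset.sum_congr rfl fun p hp => ?_
      rw [Finset.HasAntidiagonal.mem_antidiagonal] at hp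
      have hp1 : p.1 ≤ B := hp ▸ le_self_add
      have hp2 : p.2 ≤ B := hp ▸ le_add_self
      rw [coeff_truncP, coeff_truncP, if_pos (hp1.trans hB), if_pos (hp2.trans hB)]
    rw [hco]
  commutes' r := by
    have : algebraMap K (MvPowerSeries (Fin d) K) r = MvPowerSeries.C r := rfl
    show MvPolynomial.aeval y (truncP m (algebraMap K (MvPowerSeries (Fin d) K) r)) = _
    rw [this, truncP_C, MvPolynomial.aeval_C]

lemma jetEval_X {m : ℕ} (hm : 0 < m) (y : Fin d → JetRing K m) (hy : ∀ i, y i ^ m = 0)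
    (i : Fin d) : jetEval y hy (MvPowerSeries.X i) = y i := by
  show MvPolynomial.aeval y (truncP m (MvPowerSeries.X i)) = y i
  rw [truncP_X hm, MvPolynomial.aeval_X]

end Aux3

namespace Aux4
open Aux Aux2 Aux3

variable {K : Type*} [Field K] {d : ℕ}

lemma srcAct_apply (a : Fin d → ℕ) (ζ : K) (f : MvPowerSeries (Fin d) K) :
    srcAct K a ζ f = srcFun K a ζ f := rfl

lemma srcAct_C (a : Fin d → ℕ) (ζ : K) (c : K) :
    srcAct K a ζ (MvPowerSeries.C c) = MvPowerSeries.C c := by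
  apply MvPowerSeries.ext; intro B
  rw [srcAct_apply, coeff_srcFun]
  by_cases hB : B = 0
  · subst hB; simp
  · simp [MvPowerSeries.coeff_C, hB]

lemma srcAct_X (a : Fin d → ℕ) (ζ : K) (i : Fin d) :
    srcAct K a ζ (MvPowerSeries.X i)
      = MvPowerSeries.C (ζ ^ a i) * MvPowerSeries.X i := by
  apply MvPowerSeries.ext; intro B
  rw [srcAct_apply, coeff_srcFun, MvPowerSeries.coeff_C_mul, MvPowerSeries.coeff_X]
  by_cases hB : B = Finsupp.single i 1
  · subst hB
    rw [if_pos rfl, mul_one, mul_one]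
    congr 1
    rw [Finset.sum_eq_single i]
    · simp
    · intro j _ hj
      simp [Finsupp.single_apply, Ne.symm hj]
    · intro hmem; exact absurd (Finset.mem_univ i) hmem
  · rw [if_neg hB, mul_zero, mul_zero]

/-- `srcAct` as an algebra homomorphism. -/
noncomputable def srcAlg (a : Fin d → ℕ) (ζ : K) :
    MvPowerSeries (Fin d) K →ₐ[K] MvPowerSeries (Fin d) K :=
  { srcAct K a ζ with
    commutes' := fun c => srcAct_C a ζ c }

lemma srcAlg_apply (a : Fin d → ℕ) (ζ : K) (f : MvPowerSeries (Fin d) K) :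
    srcAlg a ζ f = srcAct K a ζ f := rfl

lemma tgtAct_mk (m : ℕ) (ζ : K) (f : PowerSeries K) :
    tgtAct K m ζ (Ideal.Quotient.mk (jetIdeal K m) f)
      = Ideal.Quotient.mk (jetIdeal K m) (PowerSeries.rescale ζ f) :=
  Ideal.Quotient.lift_mk _ _ _

/-- `tgtAct` as an algebra homomorphism. -/
noncomputable def tgtAlg (m : ℕ) (ζ : K) : JetRing K m →ₐ[K] JetRing K m :=
  { tgtAct K m ζ with
    commutes' := by
      intro c
      rw [← Ideal.Quotient.mk_algebraMap K (jetIdeal K m) c]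
      show tgtAct K m ζ ((Ideal.Quotient.mk (jetIdeal K m)) ((algebraMap K (PowerSeries K)) c))
        = (Ideal.Quotient.mk (jetIdeal K m)) ((algebraMap K (PowerSeries K)) c)
      rw [tgtAct_mk]
      congr 1
      apply PowerSeries.ext; intro k
      rw [PowerSeries.coeff_rescale]
      show ζ ^ k * PowerSeries.coeff k (PowerSeries.C c)
        = PowerSeries.coeff k (PowerSeries.C c)
      rw [PowerSeries.coeff_C]
      by_cases hk : k = 0
      · subst hk; simp
      · simp [hk] }

lemma tgtAlg_apply (m : ℕ) (ζ : K) (x : JetRing K m) : tgtAlg m ζ x = tgtAct K m ζ x := rfl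

lemma equivJetHom_iff {m : ℕ} (hm : 0 < m) (a : Fin d → ℕ) (ζ : K)
    (γ : MvPowerSeries (Fin d) K →ₐ[K] JetRing K m) :
    EquivJetHom K a ζ m γ ↔
      ∀ i, γ (srcAct K a ζ (MvPowerSeries.X i)) = tgtAct K m ζ (γ (MvPowerSeries.X i)) := by
  constructor
  · intro h i; exact h (MvPowerSeries.X i)
  · intro h f
    have hcomp : γ.comp (srcAlg a ζ) = (tgtAlg m ζ).comp γ := by
      apply algHom_ext_of hm
      intro i
      rw [AlgHom.comp_apply, AlgHom.comp_apply, srcAlg_apply, tgtAlg_apply]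
      exact h i
    have := AlgHom.congr_fun hcomp f
    rw [AlgHom.comp_apply, AlgHom.comp_apply, srcAlg_apply, tgtAlg_apply] at this
    exact this

/-- Root of unity exponent comparison. -/
lemma pow_eq_pow_iff_mod {l : ℕ} (hl : 0 < l) {ζ : K} (hζ : IsPrimitiveRoot ζ l) (x y : ℕ) :
    ζ ^ x = ζ ^ y ↔ x % l = y % l := by
  have hred : ∀ z : ℕ, ζ ^ z = ζ ^ (z % l) := by
    intro z
    conv_lhs => rw [← Nat.div_add_mod z l]
    rw [pow_add, pow_mul, hζ.pow_eq_one, one_pow, one_mul]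
  constructor
  · intro h
    rw [hred x, hred y] at h
    exact hζ.pow_inj (Nat.mod_lt _ hl) (Nat.mod_lt _ hl) h
  · intro h
    rw [hred x, hred y, h]

end Aux4

namespace Aux5
open Aux Aux2 Aux3 Aux4

variable {K : Type*} [Field K] {d : ℕ}

/-- `c₀ t^e + c₁ t^{l+e} + ⋯`. -/
noncomputable def tser (l : ℕ) {N : ℕ} (e : ℕ) (c : Fin N → K) : PowerSeries K :=
  ∑ j : Fin N, PowerSeries.C (c j) * (PowerSeries.X : PowerSeries K) ^ ((j : ℕ) * l + e)

lemma tser_def {l N e : ℕ} (c : Fin N → K) :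
    tser l e c
      = ∑ j : Fin N, PowerSeries.C (c j) * (PowerSeries.X : PowerSeries K) ^ ((j : ℕ) * l + e) :=
  rfl

lemma coeff_tser_hit {l : ℕ} (hl : 0 < l) {N e : ℕ} (c : Fin N → K) (j₀ : Fin N) :
    PowerSeries.coeff ((j₀ : ℕ) * l + e) (tser l e c) = c j₀ := by
  rw [tser, map_sum, Finset.sum_eq_single j₀]
  · rw [PowerSeries.coeff_C_mul, PowerSeries.coeff_X_pow, if_pos rfl, mul_one]
  · intro j _ hj
    rw [PowerSeries.coeff_C_mul, PowerSeries.coeff_X_pow, if_neg, mul_zero]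
    intro hc
    apply hj
    have h2 : (j : ℕ) * l = (j₀ : ℕ) * l := by omega
    exact Fin.ext (Nat.eq_of_mul_eq_mul_right hl h2)
  · intro hmem; exact absurd (Finset.mem_univ j₀) hmem

lemma coeff_tser_miss {l : ℕ} {N e k : ℕ} (c : Fin N → K)
    (hk : ∀ j : Fin N, k ≠ (j : ℕ) * l + e) :
    PowerSeries.coeff k (tser l e c) = 0 := by
  rw [tser, map_sum]
  apply Finset.sum_eq_zero
  intro j _
  rw [PowerSeries.coeff_C_mul, PowerSeries.coeff_X_pow, if_neg (hk j), mul_zero]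

lemma constantCoeff_tser {l : ℕ} {N e : ℕ} (he : 1 ≤ e) (c : Fin N → K) :
    PowerSeries.constantCoeff (tser l e c) = 0 := by
  rw [← PowerSeries.coeff_zero_eq_constantCoeff_apply]
  exact coeff_tser_miss c (fun j => by omega)

lemma tser_mk_pow {l : ℕ} {N e m : ℕ} (he : 1 ≤ e) (c : Fin N → K) :
    (Ideal.Quotient.mk (jetIdeal K m) (tser l e c)) ^ m = 0 :=
  jetMk_pow_eq_zero (constantCoeff_tser he c)

lemma rescale_tser {l : ℕ} {ζ : K} (hζl : ζ ^ l = 1) {N e : ℕ} (c : Fin N → K) :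
    PowerSeries.rescale ζ (tser l e c) = PowerSeries.C (ζ ^ e) * tser l e c := by
  apply PowerSeries.ext; intro k
  rw [PowerSeries.coeff_rescale, PowerSeries.coeff_C_mul]
  by_cases hex : ∃ j : Fin N, k = (j : ℕ) * l + e
  · obtain ⟨j, rfl⟩ := hex
    congr 1
    have h1 : ζ ^ ((j : ℕ) * l) = 1 := by rw [mul_comm, pow_mul, hζl, one_pow]
    rw [pow_add, h1, one_mul]
  · push_neg at hex
    rw [coeff_tser_miss c hex, mul_zero, mul_zero]

/-- The equivariant homomorphism with coefficient data `c`. -/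
noncomputable def Phi (l n : ℕ) (a : Fin d → ℕ) (ha : ∀ i, 1 ≤ a i)
    (c : Fin d → Fin n → K) : MvPowerSeries (Fin d) K →ₐ[K] JetRing K (n * l + 1) :=
  jetEval (fun i => Ideal.Quotient.mk (jetIdeal K (n * l + 1)) (tser l (a i) (c i)))
    (fun i => tser_mk_pow (ha i) (c i))

lemma Phi_X (l n : ℕ) (a : Fin d → ℕ) (ha : ∀ i, 1 ≤ a i) (c : Fin d → Fin n → K)
    (i : Fin d) :
    Phi l n a ha c (MvPowerSeries.X i)
      = Ideal.Quotient.mk (jetIdeal K (n * l + 1)) (tser l (a i) (c i)) :=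
  jetEval_X (Nat.succ_pos _) _ _ i

lemma equiv_Phi (l n : ℕ) (a : Fin d → ℕ) (ha : ∀ i, 1 ≤ a i) {ζ : K} (hζl : ζ ^ l = 1)
    (c : Fin d → Fin n → K) :
    EquivJetHom K a ζ (n * l + 1) (Phi l n a ha c) := by
  rw [equivJetHom_iff (Nat.succ_pos _)]
  intro i
  rw [srcAct_X, map_mul, Phi_X, tgtAct_mk, rescale_tser hζl, MvPowerSeries.c_eq_algebraMap,
    AlgHom.commutes, map_mul, ← Ideal.Quotient.mk_algebraMap K (jetIdeal K (n * l + 1))]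
  rfl

lemma Phi_inj (l n : ℕ) (hl : 0 < l) (a : Fin d → ℕ) (ha : ∀ i, 1 ≤ a i)
    (ha2 : ∀ i, a i ≤ l) {c c' : Fin d → Fin n → K}
    (h : Phi l n a ha c = Phi l n a ha c') : c = c' := by
  funext i j
  have hX := AlgHom.congr_fun h (MvPowerSeries.X i)
  rw [Phi_X, Phi_X, jetMk_eq_jetMk] at hX
  have hjl : (j : ℕ) * l + l ≤ n * l := by
    have h1 := Nat.mul_le_mul_right l (Nat.succ_le_of_lt j.isLt)
    rwa [Nat.succ_mul] at h1
  have hk : (j : ℕ) * l + a i < n * l + 1 := by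
    have := ha2 i
    omega
  have := hX _ hk
  rwa [coeff_tser_hit hl, coeff_tser_hit hl] at this

lemma equiv_surj (l n : ℕ) (hl : 0 < l) (a : Fin d → ℕ) (ha : ∀ i, 1 ≤ a i ∧ a i ≤ l)
    {ζ : K} (hζ : IsPrimitiveRoot ζ l)
    (γ : MvPowerSeries (Fin d) K →ₐ[K] JetRing K (n * l + 1))
    (hγ : EquivJetHom K a ζ (n * l + 1) γ) :
    ∃ c : Fin d → Fin n → K, γ = Phi l n a (fun i => (ha i).1) c := by
  have hm : 0 < n * l + 1 := Nat.succ_pos _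
  have hrep : ∀ i, ∃ f, Ideal.Quotient.mk (jetIdeal K (n * l + 1)) f
      = γ (MvPowerSeries.X i) := fun i => Ideal.Quotient.mk_surjective _
  choose f hf using hrep
  refine ⟨fun i j => PowerSeries.coeff ((j : ℕ) * l + a i) (f i), ?_⟩
  apply algHom_ext_of hm
  intro i
  rw [Phi_X, ← hf i, jetMk_eq_jetMk]
  intro k hk
  have h0 : PowerSeries.constantCoeff (f i) = 0 := gammaX_constantCoeff hm γ i (hf i)
  have hEi := hγ (MvPowerSeries.X i)
  rw [srcAct_X, map_mul, ← hf i, tgtAct_mk, MvPowerSeries.c_eq_algebraMap, AlgHom.commutes,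
    ← Ideal.Quotient.mk_algebraMap K (jetIdeal K (n * l + 1))] at hEi
  have hEi' : Ideal.Quotient.mk (jetIdeal K (n * l + 1)) (PowerSeries.C (ζ ^ a i) * f i)
      = Ideal.Quotient.mk (jetIdeal K (n * l + 1)) (PowerSeries.rescale ζ (f i)) := by
    rw [← map_mul] at hEi
    exact hEi
  rw [jetMk_eq_jetMk] at hEi'
  have hco := hEi' k hk
  rw [PowerSeries.coeff_C_mul, PowerSeries.coeff_rescale] at hco
  by_cases hex : ∃ j : Fin n, k = (j : ℕ) * l + a i
  · obtain ⟨j, rfl⟩ := hex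
    rw [coeff_tser_hit hl]
  · push_neg at hex
    rw [coeff_tser_miss _ hex]
    rcases Nat.eq_zero_or_pos k with hk0 | hk1
    · subst hk0
      rw [PowerSeries.coeff_zero_eq_constantCoeff_apply]
      exact h0
    · have hne : ζ ^ (a i) ≠ ζ ^ k := by
        intro heq
        rw [pow_eq_pow_iff_mod hl hζ] at heq
        have hkn : k ≤ n * l := by omega
        obtain ⟨j, hj⟩ := exists_j hl (ha i).1 (ha i).2 hk1 hkn heq.symm
        exact hex j hj
      have hzero : (ζ ^ a i - ζ ^ k) * PowerSeries.coeff k (f i) = 0 := by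
        rw [sub_mul, hco, sub_self]
      rcases mul_eq_zero.mp hzero with h | h
      · exact absurd (sub_eq_zero.mp h) hne
      · exact h

end Aux5

namespace Aux6
open Aux Aux2 Aux3 Aux4 Aux5

variable {K : Type*} [Field K] {d : ℕ}

lemma jetTrunc_mk (l n : ℕ) (f : PowerSeries K) :
    jetTrunc K l n (Ideal.Quotient.mk (jetIdeal K ((n + 1) * l + 1)) f)
      = Ideal.Quotient.mk (jetIdeal K (n * l + 1)) f :=
  Ideal.Quotient.factor_mk _ _

/-- `jetTrunc` as an algebra homomorphism. -/
noncomputable def jetTruncAlg (l n : ℕ) : JetRing K ((n + 1) * l + 1) →ₐ[K] JetRing K (n * l + 1) :=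
  { jetTrunc K l n with
    commutes' := by
      intro c
      rw [← Ideal.Quotient.mk_algebraMap K (jetIdeal K ((n + 1) * l + 1)) c]
      show jetTrunc K l n (Ideal.Quotient.mk _ (algebraMap K (PowerSeries K) c)) = _
      rw [jetTrunc_mk, Ideal.Quotient.mk_algebraMap] }

lemma jetTruncAlg_apply (l n : ℕ) (x : JetRing K ((n + 1) * l + 1)) :
    jetTruncAlg l n x = jetTrunc K l n x := rfl

lemma tser_snoc (l e : ℕ) {N : ℕ} (c : Fin N → K) (b : K) :
    tser l e (Fin.snoc c b : Fin (N + 1) → K)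
      = tser l e c + PowerSeries.C b * PowerSeries.X ^ (N * l + e) := by
  rw [tser, tser, Fin.sum_univ_castSucc]
  congr 1
  · refine Finset.sum_congr rfl fun j _ => ?_
    rw [Fin.snoc_castSucc, Fin.coe_castSucc]
  · rw [Fin.snoc_last, Fin.val_last]

lemma jetMk_CX {m e' : ℕ} (hme : m ≤ e') (b : K) :
    Ideal.Quotient.mk (jetIdeal K m) (PowerSeries.C b * PowerSeries.X ^ e') = 0 :=
  jetMk_eq_zero.mpr fun k hk => by
    rw [PowerSeries.coeff_C_mul, PowerSeries.coeff_X_pow, if_neg (by omega), mul_zero]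

end Aux6


open Aux Aux2 Aux3 Aux4 Aux5 Aux6

/-- Let `M` be the `d`-dimensional formal affine space over a field `K`, with
the diagonal `μ_l`-action `ζ·x_i = ζ^{a_i} x_i` (`1 ≤ a_i ≤ l`).  Then the set of
`μ_l`-equivariant `K`-algebra homomorphisms `K[[x_1,...,x_d]] → K[t]/(t^{nl+1})` (where
`ζ·t = ζt`) consists exactly of those sending each `x_i` to an element of the form
`c_0 t^{a_i} + c_1 t^{l+a_i} + ⋯ + c_{n-1} t^{(n-1)l+a_i}` with `c_j ∈ K`; in particular
this set is in bijection with `K^{nd}`, and the truncation map to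
`K[t]/(t^{nl+1})`-jets (from level `n+1` to level `n`) has all fibers isomorphic
to `K^d`. -/
theorem twisted_jets_of_formal_affine_space
    (K : Type*) [Field K] (d l n : ℕ) (hl : 0 < l)
    (ζ : K) (hζ : IsPrimitiveRoot ζ l)
    (a : Fin d → ℕ) (ha : ∀ i, 1 ≤ a i ∧ a i ≤ l) :
    ({γ : MvPowerSeries (Fin d) K →ₐ[K] JetRing K (n * l + 1) |
        EquivJetHom K a ζ (n * l + 1) γ}
      = {γ : MvPowerSeries (Fin d) K →ₐ[K] JetRing K (n * l + 1) |
          ∀ i : Fin d, ∃ c : Fin n → K,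
            γ (MvPowerSeries.X i)
              = Ideal.Quotient.mk (jetIdeal K (n * l + 1))
                  (∑ j : Fin n,
                    PowerSeries.C (c j) * (PowerSeries.X : PowerSeries K) ^ ((j : ℕ) * l + a i))}) ∧
    Nonempty
      ({γ : MvPowerSeries (Fin d) K →ₐ[K] JetRing K (n * l + 1) //
          EquivJetHom K a ζ (n * l + 1) γ} ≃ (Fin d → Fin n → K)) ∧
    (∀ γ₀ : {γ : MvPowerSeries (Fin d) K →ₐ[K] JetRing K (n * l + 1) //
        EquivJetHom K a ζ (n * l + 1) γ},
      Nonempty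
        ({γ : {γ : MvPowerSeries (Fin d) K →ₐ[K] JetRing K ((n + 1) * l + 1) //
            EquivJetHom K a ζ ((n + 1) * l + 1) γ} //
            (jetTrunc K l n).comp (γ : MvPowerSeries (Fin d) K →ₐ[K]
                JetRing K ((n + 1) * l + 1)).toRingHom
              = ((γ₀ : MvPowerSeries (Fin d) K →ₐ[K] JetRing K (n * l + 1)).toRingHom)} ≃
          (Fin d → K))) := by
  have hm : 0 < n * l + 1 := Nat.succ_pos _
  have ha1 : ∀ i, 1 ≤ a i := fun i => (ha i).1
  have ha2 : ∀ i, a i ≤ l := fun i => (ha i).2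
  have hζl : ζ ^ l = 1 := hζ.pow_eq_one
  refine ⟨?_, ?_, ?_⟩
  · ext γ
    simp only [Set.mem_setOf_eq]
    constructor
    · intro hγ
      obtain ⟨c, rfl⟩ := equiv_surj l n hl a ha hζ _ hγ
      intro i
      exact ⟨c i, by rw [Phi_X, tser_def]⟩
    · intro h
      choose c hc using h
      have hγ : γ = Phi l n a ha1 c := by
        apply algHom_ext_of hm
        intro i
        rw [hc i, Phi_X, tser_def]
      rw [hγ]
      exact equiv_Phi l n a ha1 hζl c
  · refine ⟨(Equiv.ofBijective (fun c : Fin d → Fin n → K =>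
      (⟨Phi l n a ha1 c, equiv_Phi l n a ha1 hζl c⟩ :
        {γ : MvPowerSeries (Fin d) K →ₐ[K] JetRing K (n * l + 1) //
          EquivJetHom K a ζ (n * l + 1) γ})) ⟨?_, ?_⟩).symm⟩
    · intro c c' hcc
      exact Phi_inj l n hl a ha1 ha2 (Subtype.mk_eq_mk.mp hcc)
    · rintro ⟨γ, hγ⟩
      obtain ⟨c, rfl⟩ := equiv_surj l n hl a ha hζ _ hγ
      exact ⟨c, rfl⟩
  · rintro ⟨γ₀, hγ₀⟩
    obtain ⟨c₀, rfl⟩ := equiv_surj l n hl a ha hζ _ hγ₀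
    have key : ∀ c : Fin d → Fin (n + 1) → K,
        (jetTruncAlg l n).comp (Phi l (n + 1) a ha1 c)
          = Phi l n a ha1 (fun i => fun j => c i j.castSucc) := by
      intro c
      apply algHom_ext_of hm
      intro i
      rw [AlgHom.comp_apply, Phi_X, jetTruncAlg_apply, jetTrunc_mk]
      have hsnoc : (c i) = Fin.snoc (fun j => c i (Fin.castSucc j)) (c i (Fin.last n)) := by
        funext j
        refine Fin.lastCases ?_ ?_ j
        · rw [Fin.snoc_last]
        · intro j'; rw [Fin.snoc_castSucc]
      rw [Phi_X]
      conv_lhs => rw [hsnoc, tser_snoc]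
      rw [map_add,
        jetMk_CX (m := n * l + 1) (e' := n * l + a i) (by have := ha1 i; omega)
          (c i (Fin.last n)), add_zero]
    have hfib : ∀ b : Fin d → K,
        (jetTrunc K l n).comp (Phi l (n + 1) a ha1
            (fun i => Fin.snoc (c₀ i) (b i))).toRingHom
          = (Phi l n a ha1 c₀).toRingHom := by
      intro b
      have h1 := key (fun i => Fin.snoc (c₀ i) (b i))
      have h2 : (fun i => fun j : Fin n =>
          (Fin.snoc (c₀ i) (b i) : Fin (n + 1) → K) j.castSucc) = c₀ := by
        funext i j; rw [Fin.snoc_castSucc]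
      rw [h2] at h1
      exact congrArg AlgHom.toRingHom h1
    refine ⟨(Equiv.ofBijective (fun b : Fin d → K =>
      ⟨⟨Phi l (n + 1) a ha1 (fun i => Fin.snoc (c₀ i) (b i)),
        equiv_Phi l (n + 1) a ha1 hζl _⟩, hfib b⟩) ⟨?_, ?_⟩).symm⟩
    · intro b b' hbb
      have h1 : Phi l (n + 1) a ha1 (fun i => Fin.snoc (c₀ i) (b i))
          = Phi l (n + 1) a ha1 (fun i => Fin.snoc (c₀ i) (b' i)) :=
        congrArg (fun x => x.val.val) hbb
      have h2 := Phi_inj l (n + 1) hl a ha1 ha2 h1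
      funext i
      have h3 := congrFun (congrFun h2 i) (Fin.last n)
      rwa [Fin.snoc_last, Fin.snoc_last] at h3
    · rintro ⟨⟨γ', hE'⟩, hfb⟩
      obtain ⟨c, rfl⟩ := equiv_surj l (n + 1) hl a ha hζ _ hE'
      have hAlg : (jetTruncAlg l n).comp (Phi l (n + 1) a ha1 c) = Phi l n a ha1 c₀ :=
        AlgHom.ext fun x => RingHom.congr_fun hfb x
      have hfront : (fun i => fun j : Fin n => c i j.castSucc) = c₀ :=
        Phi_inj l n hl a ha1 ha2 ((key c).symm.trans hAlg)
      refine ⟨fun i => c i (Fin.last n), ?_⟩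
      apply Subtype.ext
      apply Subtype.ext
      show Phi l (n + 1) a ha1 _ = Phi l (n + 1) a ha1 c
      apply congrArg
      funext i j
      refine Fin.lastCases ?_ ?_ j
      · rw [Fin.snoc_last]
      · intro j'
        rw [Fin.snoc_castSucc]
        exact (congrFun (congrFun hfront i) j').symm
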